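/- Let D ⊆ ℝⁿ be a compact set, g : D → ℝ Lipschitz with constant l_g, let μ be a probability measure on D, and let the inputs x₁,…,x_N be sampled i.i.d. from μ, with outputs yᵢ satisfying ‖g(xᵢ) − yᵢ‖ ≤ ε̄. Fix ε ≥ ε̄ and ρ > 0, let l* be the minimal Lipschitz constant over all Lipschitz f : D → ℝ with max_i ‖yᵢ − f(xᵢ)‖ ≤ ε, and suppose h > 0 and δ ∈ [0,1) are such that the covering radius satisfies h(X,D) ≤ h with probability at least 1 − δ. Then with probability at least 1 − δ, every Lipschitz f : D → ℝ with max_i ‖yᵢ − f(xᵢ)‖ ≤ ε and Lip(f) ≤ l* + ρ satisfies sup_{x∈D} ‖g(x) − f(x)‖ ≤ (2·l_g + ρ)·h + 2ε. -/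

import Mathlib

open scoped NNReal ENNReal
open MeasureTheory

/-- The Lipschitz seminorm of `f` on the set `D`. -/
noncomputable def lipSemi {n : ℕ} (D : Set (EuclideanSpace ℝ (Fin n)))
    (f : EuclideanSpace ℝ (Fin n) → ℝ) : ℝ :=
  sInf {γ : ℝ | 0 ≤ γ ∧ ∀ x ∈ D, ∀ y ∈ D, ‖f x - f y‖ ≤ γ * ‖x - y‖}

lemma lipSemi_set_nonempty {n : ℕ} {D : Set (EuclideanSpace ℝ (Fin n))}
    {f : EuclideanSpace ℝ (Fin n) → ℝ} (hf : ∃ C : ℝ≥0, LipschitzOnWith C f D) :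
    ({γ : ℝ | 0 ≤ γ ∧ ∀ x ∈ D, ∀ y ∈ D, ‖f x - f y‖ ≤ γ * ‖x - y‖}).Nonempty := by
  obtain ⟨C, hC⟩ := hf
  refine ⟨C, C.coe_nonneg, fun x hx y hy => ?_⟩
  have := hC.dist_le_mul x hx y hy
  simpa [dist_eq_norm] using this

lemma lipSemi_nonneg {n : ℕ} {D : Set (EuclideanSpace ℝ (Fin n))}
    {f : EuclideanSpace ℝ (Fin n) → ℝ} (hf : ∃ C : ℝ≥0, LipschitzOnWith C f D) :
    0 ≤ lipSemi D f :=
  le_csInf (lipSemi_set_nonempty hf) fun _ hγ => hγ.1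

lemma lipSemi_le {n : ℕ} {D : Set (EuclideanSpace ℝ (Fin n))}
    {f : EuclideanSpace ℝ (Fin n) → ℝ} {γ : ℝ} (hγ : 0 ≤ γ)
    (hγ' : ∀ x ∈ D, ∀ y ∈ D, ‖f x - f y‖ ≤ γ * ‖x - y‖) :
    lipSemi D f ≤ γ :=
  csInf_le ⟨0, fun _ ha => ha.1⟩ ⟨hγ, hγ'⟩

lemma lipSemi_bound {n : ℕ} {D : Set (EuclideanSpace ℝ (Fin n))}
    {f : EuclideanSpace ℝ (Fin n) → ℝ} (hf : ∃ C : ℝ≥0, LipschitzOnWith C f D)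
    {x : EuclideanSpace ℝ (Fin n)} (hx : x ∈ D) {z : EuclideanSpace ℝ (Fin n)} (hz : z ∈ D) :
    ‖f x - f z‖ ≤ lipSemi D f * ‖x - z‖ := by
  rcases eq_or_ne x z with rfl | hxz
  · simp
  · have hnorm : 0 < ‖x - z‖ := by
      rw [norm_pos_iff]
      exact sub_ne_zero.mpr hxz
    rw [← div_le_iff₀ hnorm] at *
    refine le_csInf (lipSemi_set_nonempty hf) fun γ hγ => ?_
    rw [div_le_iff₀ hnorm]
    exact hγ.2 x hx z hz

theorem stmt10 {n N : ℕ} (hN : 0 < N)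
    (D : Set (EuclideanSpace ℝ (Fin n))) (hD : IsCompact D)
    (g : EuclideanSpace ℝ (Fin n) → ℝ) (lg : ℝ) (hlg : 0 ≤ lg)
    (hg : ∀ x ∈ D, ∀ y ∈ D, ‖g x - g y‖ ≤ lg * ‖x - y‖)
    (μ : Measure (EuclideanSpace ℝ (Fin n))) [IsProbabilityMeasure μ]
    (hμD : μ Dᶜ = 0)
    -- noisy outputs, depending on the sampled inputs
    (y : (Fin N → EuclideanSpace ℝ (Fin n)) → Fin N → ℝ)
    (εbar ε ρ h δ : ℝ) (hεbar : 0 ≤ εbar) (hεε : εbar ≤ ε) (hρ : 0 < ρ) (hh : 0 < h)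
    (hδ : 0 ≤ δ) (hδ1 : δ < 1)
    (hnoise : ∀ ω : Fin N → EuclideanSpace ℝ (Fin n), ∀ i, ‖g (ω i) - y ω i‖ ≤ εbar)
    -- the covering radius is at most h with probability at least 1 - δ
    (hcov : ENNReal.ofReal (1 - δ) ≤
      (Measure.pi fun _ : Fin N => μ)
        {ω | ∀ x ∈ D, Metric.infDist x (Set.range ω) ≤ h}) :
    ENNReal.ofReal (1 - δ) ≤
      (Measure.pi fun _ : Fin N => μ)
        {ω | ∀ f : EuclideanSpace ℝ (Fin n) → ℝ,
          (∃ C : ℝ≥0, LipschitzOnWith C f D) →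
          (∀ i, ‖y ω i - f (ω i)‖ ≤ ε) →
          lipSemi D f ≤ sInf {l : ℝ | ∃ f' : EuclideanSpace ℝ (Fin n) → ℝ,
              (∃ C : ℝ≥0, LipschitzOnWith C f' D) ∧
              (∀ i, ‖y ω i - f' (ω i)‖ ≤ ε) ∧
              l = lipSemi D f'} + ρ →
          ∀ x ∈ D, ‖g x - f x‖ ≤ (2 * lg + ρ) * h + 2 * ε} := by
  classical
  set P := Measure.pi fun _ : Fin N => μ with hP
  set S := {ω : Fin N → EuclideanSpace ℝ (Fin n) | ∀ x ∈ D, Metric.infDist x (Set.range ω) ≤ h}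
  set T := {ω : Fin N → EuclideanSpace ℝ (Fin n) | ∀ i, ω i ∈ D}
  have hTc : P Tᶜ = 0 := by
    have hTc_eq : Tᶜ = ⋃ i, Function.eval i ⁻¹' Dᶜ := by
      ext ω; simp [T, Function.eval]
    rw [hTc_eq, hP]
    exact measure_iUnion_null fun i => Measure.pi_eval_preimage_null (μ := fun _ : Fin N => μ) hμD
  have hST : P (S ∩ T) = P S := measure_inter_conull hTc
  calc ENNReal.ofReal (1 - δ) ≤ P S := hcov
    _ = P (S ∩ T) := hST.symm
    _ ≤ _ := by
        refine measure_mono ?_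
        rintro ω ⟨hωS, hωT⟩ f hf hfy hflip x hxD
        -- the minimal Lipschitz constant is at most lg
        have hgLip : ∃ C : ℝ≥0, LipschitzOnWith C g D := by
          refine ⟨⟨lg, hlg⟩, LipschitzOnWith.of_dist_le_mul fun a ha b hb => ?_⟩
          have := hg a ha b hb; rw [dist_eq_norm, dist_eq_norm]; exact this
        have hlipg : lipSemi D g ≤ lg := lipSemi_le hlg hg
        have hmem : lipSemi D g ∈ {l : ℝ | ∃ f' : EuclideanSpace ℝ (Fin n) → ℝ,
            (∃ C : ℝ≥0, LipschitzOnWith C f' D) ∧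
            (∀ i, ‖y ω i - f' (ω i)‖ ≤ ε) ∧ l = lipSemi D f'} := by
          refine ⟨g, hgLip, fun i => ?_, rfl⟩
          have := hnoise ω i
          rw [norm_sub_rev] at this
          linarith
        have hbdd : BddBelow {l : ℝ | ∃ f' : EuclideanSpace ℝ (Fin n) → ℝ,
            (∃ C : ℝ≥0, LipschitzOnWith C f' D) ∧
            (∀ i, ‖y ω i - f' (ω i)‖ ≤ ε) ∧ l = lipSemi D f'} := by
          refine ⟨0, ?_⟩
          rintro l ⟨f', hf', -, rfl⟩
          exact lipSemi_nonneg hf'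
        have hstar : sInf {l : ℝ | ∃ f' : EuclideanSpace ℝ (Fin n) → ℝ,
            (∃ C : ℝ≥0, LipschitzOnWith C f' D) ∧
            (∀ i, ‖y ω i - f' (ω i)‖ ≤ ε) ∧ l = lipSemi D f'} ≤ lg :=
          le_trans (csInf_le hbdd hmem) hlipg
        have hL : lipSemi D f ≤ lg + ρ := by linarith
        have hL0 : 0 ≤ lipSemi D f := lipSemi_nonneg hf
        -- main estimate, up to an arbitrary η > 0
        have key : ∀ η : ℝ, 0 < η →
            ‖g x - f x‖ ≤ (2 * lg + ρ) * h + 2 * ε + (2 * lg + ρ) * η := by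
          intro η hη
          have : Nonempty (Fin N) := Fin.pos_iff_nonempty.mp hN
          have hne : (Set.range ω).Nonempty := Set.range_nonempty ω
          have hlt : Metric.infDist x (Set.range ω) < h + η := lt_of_le_of_lt (hωS x hxD) (by linarith)
          obtain ⟨p, ⟨i, rfl⟩, hpd⟩ := (Metric.infDist_lt_iff hne).mp hlt
          have hd : ‖x - ω i‖ ≤ h + η := by
            rw [← dist_eq_norm]; exact le_of_lt hpd
          have h1 : ‖g x - g (ω i)‖ ≤ lg * ‖x - ω i‖ := hg x hxD _ (hωT i)
          have h2 : ‖g (ω i) - y ω i‖ ≤ εbar := hnoise ω i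
          have h3 : ‖y ω i - f (ω i)‖ ≤ ε := hfy i
          have h4 : ‖f (ω i) - f x‖ ≤ lipSemi D f * ‖ω i - x‖ := lipSemi_bound hf (hωT i) hxD
          have hnr : ‖(ω i : EuclideanSpace ℝ (Fin n)) - x‖ = ‖x - ω i‖ := norm_sub_rev _ _
          have htri : ‖g x - f x‖ ≤ ‖g x - g (ω i)‖ + ‖g (ω i) - y ω i‖ +
              ‖y ω i - f (ω i)‖ + ‖f (ω i) - f x‖ := by
            have heq : g x - f x = (g x - g (ω i)) + (g (ω i) - y ω i) +
                (y ω i - f (ω i)) + (f (ω i) - f x) := by ring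
            rw [heq]
            calc ‖(g x - g (ω i)) + (g (ω i) - y ω i) + (y ω i - f (ω i)) + (f (ω i) - f x)‖
                ≤ ‖(g x - g (ω i)) + (g (ω i) - y ω i) + (y ω i - f (ω i))‖ + ‖f (ω i) - f x‖ :=
                  norm_add_le _ _
              _ ≤ ‖(g x - g (ω i)) + (g (ω i) - y ω i)‖ + ‖y ω i - f (ω i)‖ + ‖f (ω i) - f x‖ := by
                  gcongr; exact norm_add_le _ _
              _ ≤ ‖g x - g (ω i)‖ + ‖g (ω i) - y ω i‖ + ‖y ω i - f (ω i)‖ + ‖f (ω i) - f x‖ := by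
                  gcongr; exact norm_add_le _ _
          rw [hnr] at h4
          have hnn : 0 ≤ ‖x - ω i‖ := norm_nonneg _
          nlinarith [mul_le_mul hL hd hnn (by linarith : (0:ℝ) ≤ lg + ρ),
            mul_le_mul_of_nonneg_left hd hlg]
        refine le_of_forall_pos_le_add fun η' hη' => ?_
        have hpos : 0 < 2 * lg + ρ := by linarith
        have := key (η' / (2 * lg + ρ)) (div_pos hη' hpos)
        calc ‖g x - f x‖ ≤ (2 * lg + ρ) * h + 2 * ε + (2 * lg + ρ) * (η' / (2 * lg + ρ)) := this
          _ = (2 * lg + ρ) * h + 2 * ε + η' := by field_simp
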